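/- Let G be a C^∞ Lie group modelled on I : ModelWithCorners ℝ E H and let S : G → Submodule ℝ E be a multiplicative distribution on G. Then S is invariant under the inversion map: for every g : G, Submodule.map (mfderiv I I (fun x => x⁻¹) g) (S g) = S g⁻¹, i.e. the tangent map of the inversion at g carries S(g) onto S(g⁻¹). -/

import Mathlib

open Manifold

/-- A multiplicative distribution on a Lie group is invariant under inversion: the
tangent map of the inversion at `g` carries `S g` onto `S g⁻¹`. -/
theorem stmt_8 {E : Type*} [NormedAddCommGroup E] [NormedSpace ℝ E]
    {H : Type*} [TopologicalSpace H] (I : ModelWithCorners ℝ E H)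
    {G : Type*} [TopologicalSpace G] [ChartedSpace H G] [Group G] [LieGroup I (⊤ : ℕ∞) G]
    (S : G → Submodule ℝ E)
    (hS : ∀ (g h : G) (v w : E), v ∈ S g → w ∈ S h →
      mfderiv (I.prod I) I (fun p : G × G => p.1 * p.2) (g, h)
        ((v, w) : TangentSpace (I.prod I) (g, h)) ∈ S (g * h)) :
    ∀ g : G, Submodule.map (ContinuousLinearMap.toLinearMap (M := E) (M₂ := E) (mfderiv I I (fun x : G => x⁻¹) g)) (S g) = S g⁻¹ := by
  have hmul : ∀ p : G × G, MDifferentiableAt (I.prod I) I (fun p : G × G => p.1 * p.2) p :=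
    fun p => (contMDiff_mul I (⊤ : ℕ∞)).mdifferentiableAt (by simp)
  have hinv : ∀ a : G, MDifferentiableAt I I (fun x : G => x⁻¹) a :=
    fun a => (contMDiff_inv I (⊤ : ℕ∞)).mdifferentiableAt (by simp)
  have hL : ∀ a b : G, MDifferentiableAt I I (fun y : G => a * y) b := by
    intro a b
    have : (fun y : G => a * y) = (fun p : G × G => p.1 * p.2) ∘ (fun y : G => (a, y)) := rfl
    rw [this]
    exact (hmul (a, b)).comp b (mdifferentiableAt_const.prodMk mdifferentiableAt_id)
  -- derivative of left multiplication as partial derivative of mul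
  have h2 : ∀ (a b : G) (w : E),
      mfderiv (I.prod I) I (fun p : G × G => p.1 * p.2) (a, b)
        ((0, w) : TangentSpace (I.prod I) (a, b)) = mfderiv I I (fun y : G => a * y) b w := by
    intro a b w
    have e : (fun y : G => a * y) = (fun p : G × G => p.1 * p.2) ∘ (fun y : G => (a, y)) := rfl
    rw [e, mfderiv_comp b (hmul (a, b)) (mdifferentiableAt_const.prodMk mdifferentiableAt_id),
      mfderiv_prod_right]
    rfl
  -- key: inversion derivative maps S g into S g⁻¹
  have key : ∀ (g : G) (v : E), v ∈ S g → mfderiv I I (fun x : G => x⁻¹) g v ∈ S g⁻¹ := by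
    intro g v hv
    set w : E := mfderiv I I (fun x : G => x⁻¹) g v with hw
    -- derivative of x ↦ x * x⁻¹ is zero
    have hzero : mfderiv (I.prod I) I (fun p : G × G => p.1 * p.2) (g, g⁻¹)
        ((v, w) : TangentSpace (I.prod I) (g, g⁻¹)) = 0 := by
      have e1 : (fun x : G => x * x⁻¹) =
          (fun p : G × G => p.1 * p.2) ∘ (fun x : G => (x, x⁻¹)) := rfl
      have e2 : (fun x : G => x * x⁻¹) = fun _ : G => (1 : G) := funext fun x => mul_inv_cancel x
      have hpair : MDifferentiableAt I (I.prod I) (fun x : G => (x, x⁻¹)) g :=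
        mdifferentiableAt_id.prodMk (hinv g)
      have c1 : mfderiv I I (fun x : G => x * x⁻¹) g =
          (mfderiv (I.prod I) I (fun p : G × G => p.1 * p.2) (g, g⁻¹)).comp
            (mfderiv I (I.prod I) (fun x : G => (x, x⁻¹)) g) := by
        rw [e1]; exact mfderiv_comp g (hmul (g, g⁻¹)) hpair
      have c2 : mfderiv I (I.prod I) (fun x : G => (x, x⁻¹)) g =
          (mfderiv I I (id : G → G) g).prod (mfderiv I I (fun x : G => x⁻¹) g) :=
        mdifferentiableAt_id.mfderiv_prod (hinv g)
      have c3 : mfderiv I I (fun x : G => x * x⁻¹) g = 0 := by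
        rw [e2]; exact mfderiv_const
      have := congrArg (fun L => L v) c1
      simp only [c3, c2, ContinuousLinearMap.comp_apply, ContinuousLinearMap.prod_apply,
        mfderiv_id, ContinuousLinearMap.zero_apply, ContinuousLinearMap.id_apply] at this
      exact this.symm
    -- hence dmul (0, w) = - dmul (v, 0) ∈ S (g * g⁻¹)
    have hv0 : mfderiv (I.prod I) I (fun p : G × G => p.1 * p.2) (g, g⁻¹)
        ((v, 0) : TangentSpace (I.prod I) (g, g⁻¹)) ∈ S (g * g⁻¹) :=
      hS g g⁻¹ v 0 hv (S g⁻¹).zero_mem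
    have hsplit : mfderiv (I.prod I) I (fun p : G × G => p.1 * p.2) (g, g⁻¹)
          ((v, w) : TangentSpace (I.prod I) (g, g⁻¹)) =
        mfderiv (I.prod I) I (fun p : G × G => p.1 * p.2) (g, g⁻¹)
          ((v, 0) : TangentSpace (I.prod I) (g, g⁻¹)) +
        mfderiv (I.prod I) I (fun p : G × G => p.1 * p.2) (g, g⁻¹)
          ((0, w) : TangentSpace (I.prod I) (g, g⁻¹)) := by
      have hadd := ContinuousLinearMap.map_add (mfderiv (I.prod I) I (fun p : G × G => p.1 * p.2) (g, g⁻¹)) ((v, 0) : TangentSpace (I.prod I) (g, g⁻¹)) ((0, w) : TangentSpace (I.prod I) (g, g⁻¹))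
      rw [← hadd]
      congr 1
      exact (Prod.ext (add_zero v).symm (zero_add w).symm)
    have hu : mfderiv (I.prod I) I (fun p : G × G => p.1 * p.2) (g, g⁻¹)
        ((0, w) : TangentSpace (I.prod I) (g, g⁻¹)) ∈ S (g * g⁻¹) := by
      have : mfderiv (I.prod I) I (fun p : G × G => p.1 * p.2) (g, g⁻¹)
          ((0, w) : TangentSpace (I.prod I) (g, g⁻¹)) = -
        mfderiv (I.prod I) I (fun p : G × G => p.1 * p.2) (g, g⁻¹)
          ((v, 0) : TangentSpace (I.prod I) (g, g⁻¹)) := by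
        have h := hsplit.symm.trans hzero
        exact eq_neg_of_add_eq_zero_left (by rw [add_comm]; exact h)
      rw [this]; exact (S (g * g⁻¹)).neg_mem hv0
    -- u = dL_g w ∈ S (g * g⁻¹); push forward by dL_{g⁻¹}
    set u : E := mfderiv I I (fun y : G => g * y) g⁻¹ w with hudef
    have hu' : u ∈ S (g * g⁻¹) := by rw [hudef, ← h2 g g⁻¹ w]; exact hu
    have hfin : mfderiv (I.prod I) I (fun p : G × G => p.1 * p.2) (g⁻¹, g * g⁻¹)
        ((0, u) : TangentSpace (I.prod I) (g⁻¹, g * g⁻¹)) ∈ S (g⁻¹ * (g * g⁻¹)) :=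
      hS g⁻¹ (g * g⁻¹) 0 u (S g⁻¹).zero_mem hu'
    rw [h2] at hfin
    -- dL_{g⁻¹} (dL_g w) = w
    have hcomp : mfderiv I I (fun y : G => g⁻¹ * y) (g * g⁻¹) u = w := by
      have e : (fun y : G => g⁻¹ * y) ∘ (fun y : G => g * y) = id :=
        funext fun y => inv_mul_cancel_left g y
      have := mfderiv_comp g⁻¹ (hL g⁻¹ (g * g⁻¹)) (hL g g⁻¹)
      rw [e, mfderiv_id] at this
      have := congrArg (fun L => L w) this
      exact this.symm
    rw [hcomp] at hfin
    have hpt : g⁻¹ * (g * g⁻¹) = g⁻¹ := by group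
    rwa [hpt] at hfin
  intro g
  apply le_antisymm (α := Submodule ℝ E)
  · rintro x ⟨v, hv, rfl⟩
    exact key g v hv
  · intro w hw
    rw [← inv_inv g]
    refine ⟨mfderiv I I (fun x : G => x⁻¹) g⁻¹ w, key g⁻¹ w hw, ?_⟩
    have e : (fun x : G => x⁻¹) ∘ (fun x : G => x⁻¹) = id := funext fun x => inv_inv x
    have hc := mfderiv_comp (I' := I) g⁻¹ (hinv g⁻¹⁻¹) (hinv g⁻¹)
    rw [e, mfderiv_id] at hc
    have h := congrArg (fun L => L w) hc
    exact h.symm
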